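/- The Hirota map T(x,y,z) = (xy/(x+z), x+z, yz/(x+z)) on ℂ³ satisfies the functional tetrahedron equation T^{123} ∘ T^{145} ∘ T^{246} ∘ T^{356} = T^{356} ∘ T^{246} ∘ T^{145} ∘ T^{123}, wherever all denominators are nonzero. -/

import Mathlib

set_option maxHeartbeats 4000000


/-- The Hirota tetrahedron map `T(x,y,z) = (xy/(x+z), x+z, yz/(x+z))`. -/
noncomputable def hirotaT : ℂ × ℂ × ℂ → ℂ × ℂ × ℂ :=
  fun (x, y, z) => (x * y / (x + z), x + z, y * z / (x + z))

/-- The denominator occurring in the Hirota map is nonzero. -/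
def hirotaOk : ℂ × ℂ × ℂ → Prop :=
  fun (x, _y, z) => x + z ≠ 0

section Lifts
variable (T : ℂ × ℂ × ℂ → ℂ × ℂ × ℂ)

/-- `T` acting on coordinates 1,2,3 of a 6-tuple. -/
def lift123 : ℂ × ℂ × ℂ × ℂ × ℂ × ℂ → ℂ × ℂ × ℂ × ℂ × ℂ × ℂ :=
  fun (a, b, c, d, e, f) =>
    let t := T (a, b, c); (t.1, t.2.1, t.2.2, d, e, f)

/-- `T` acting on coordinates 1,4,5 of a 6-tuple. -/
def lift145 : ℂ × ℂ × ℂ × ℂ × ℂ × ℂ → ℂ × ℂ × ℂ × ℂ × ℂ × ℂ :=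
  fun (a, b, c, d, e, f) =>
    let t := T (a, d, e); (t.1, b, c, t.2.1, t.2.2, f)

/-- `T` acting on coordinates 2,4,6 of a 6-tuple. -/
def lift246 : ℂ × ℂ × ℂ × ℂ × ℂ × ℂ → ℂ × ℂ × ℂ × ℂ × ℂ × ℂ :=
  fun (a, b, c, d, e, f) =>
    let t := T (b, d, f); (a, t.1, c, t.2.1, e, t.2.2)

/-- `T` acting on coordinates 3,5,6 of a 6-tuple. -/
def lift356 : ℂ × ℂ × ℂ × ℂ × ℂ × ℂ → ℂ × ℂ × ℂ × ℂ × ℂ × ℂ :=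
  fun (a, b, c, d, e, f) =>
    let t := T (c, e, f); (a, b, t.1, d, t.2.1, t.2.2)

end Lifts

/-- Projection on coordinates 1,2,3. -/
def proj123 : ℂ × ℂ × ℂ × ℂ × ℂ × ℂ → ℂ × ℂ × ℂ :=
  fun (a, b, c, _, _, _) => (a, b, c)

/-- Projection on coordinates 1,4,5. -/
def proj145 : ℂ × ℂ × ℂ × ℂ × ℂ × ℂ → ℂ × ℂ × ℂ :=
  fun (a, _, _, d, e, _) => (a, d, e)

/-- Projection on coordinates 2,4,6. -/
def proj246 : ℂ × ℂ × ℂ × ℂ × ℂ × ℂ → ℂ × ℂ × ℂ :=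
  fun (_, b, _, d, _, f) => (b, d, f)

/-- Projection on coordinates 3,5,6. -/
def proj356 : ℂ × ℂ × ℂ × ℂ × ℂ × ℂ → ℂ × ℂ × ℂ :=
  fun (_, _, c, _, e, f) => (c, e, f)

/-- The Hirota map satisfies the functional tetrahedron equation,
wherever all denominators arising in both composed sides are nonzero. -/
theorem hirota_tetrahedron (p : ℂ × ℂ × ℂ × ℂ × ℂ × ℂ)
    (h1 : hirotaOk (proj356 p))
    (h2 : hirotaOk (proj246 (lift356 hirotaT p)))
    (h3 : hirotaOk (proj145 (lift246 hirotaT (lift356 hirotaT p))))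
    (h4 : hirotaOk (proj123 (lift145 hirotaT (lift246 hirotaT (lift356 hirotaT p)))))
    (h5 : hirotaOk (proj123 p))
    (h6 : hirotaOk (proj145 (lift123 hirotaT p)))
    (h7 : hirotaOk (proj246 (lift145 hirotaT (lift123 hirotaT p))))
    (h8 : hirotaOk (proj356 (lift246 hirotaT (lift145 hirotaT (lift123 hirotaT p))))) :
    lift123 hirotaT (lift145 hirotaT (lift246 hirotaT (lift356 hirotaT p)))
      = lift356 hirotaT (lift246 hirotaT (lift145 hirotaT (lift123 hirotaT p))) := by
  obtain ⟨a, b, c, d, e, f⟩ := p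
  simp only [hirotaOk, hirotaT, lift123, lift145, lift246, lift356,
    proj123, proj145, proj246, proj356] at *
  field_simp at h2 h4 h6 h8
  simp only [div_ne_zero_iff] at h2 h4 h6 h8
  obtain ⟨h2, -⟩ := h2; obtain ⟨h4, -⟩ := h4; obtain ⟨h6, -⟩ := h6; obtain ⟨h8, -⟩ := h8
  have h2' : (c + f) * b + e * f ≠ 0 := by convert h2 using 1; ring
  have h4' : a * (b * (c + f) + e * f) + e * c * (a + (c + f)) ≠ 0 := by convert h4 using 1; ring
  have h6' : a * b + e * (a + c) ≠ 0 := by convert h6 using 1; ring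
  have h8' : c * b * (a + c + f) + f * (b * a + e * (a + c)) ≠ 0 := by convert h8 using 1; ring
  refine Prod.ext ?_ (Prod.ext ?_ (Prod.ext ?_ (Prod.ext ?_ (Prod.ext ?_ ?_)))) <;>
    first
      | rfl
      | (field_simp
         ring)
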